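/- Consider the family of curves over Spec C[[t]] given by y² = x²(x² + 2bx + c) with b, c ∈ C[[t]] nonzero, ord(b²) > ord(c) > 0, d := b² − c with √d, √c ∈ C[[t]]. Let σ be a C[[t]]-point of the smooth locus of the form σ(t) = (a + O(t), ε a² + O(t)) with a ≠ 0 and ε ∈ {±1} (lying on the branch y = εx² + ... of the special fiber). Define u := (x² + y + x√c)/(x² + y − x√c). Then σ*u is a unit of C((t)) lying in C[[t]] with value at t = 0 equal to ε. -/

import Mathlib

/-!
STATEMENT 16: Consider the family of curves over `Spec ℂ[[t]]` given by
`y² = x²(x² + 2bx + c)` with `b, c ∈ ℂ[[t]]` nonzero, `ord(b²) > ord(c) > 0`,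
`d := b² − c` with `√d, √c ∈ ℂ[[t]]` (a split good tacnodal degeneration).  Let `σ` be a
`ℂ[[t]]`-point of the smooth locus of the form `σ(t) = (a + O(t), ε a² + O(t))` with
`a ≠ 0` and `ε ∈ {±1}` (lying on the branch `y = εx² + ...` of the special fiber).
Define `u := (x² + y + x√c)/(x² + y − x√c)`.  Then `σ*u` is a unit of `ℂ((t))` lying in
`ℂ[[t]]` with value at `t = 0` equal to `ε`.

We express `σ*u ∈ ℂ[[t]]` with value `ε` by: the denominator `x_σ² + y_σ − x_σ√c` is
nonzero and divides the numerator with quotient `w ∈ ℂ[[t]]` a unit of constant term `ε`.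
-/

open PowerSeries

theorem section_specialization (b c s2 : PowerSeries ℂ) (hb : b ≠ 0) (hc : c ≠ 0)
    (hord : c.order < (b ^ 2).order) (hc0 : 0 < c.order)
    (hs2 : s2 ^ 2 = c) (hsd : ∃ sd : PowerSeries ℂ, sd ^ 2 = b ^ 2 - c)
    (hd : b ^ 2 - c ≠ 0)
    (xσ yσ : PowerSeries ℂ) (a ε : ℂ) (ha : a ≠ 0) (hε : ε = 1 ∨ ε = -1)
    (hcurve : yσ ^ 2 = xσ ^ 2 * (xσ ^ 2 + 2 * b * xσ + c))
    (hx0 : PowerSeries.constantCoeff xσ = a)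
    (hy0 : PowerSeries.constantCoeff yσ = ε * a ^ 2) :
    (xσ ^ 2 + yσ - xσ * s2) ≠ 0 ∧
    ∃ w : PowerSeries ℂ, IsUnit w ∧
      (xσ ^ 2 + yσ - xσ * s2) * w = xσ ^ 2 + yσ + xσ * s2 ∧
      PowerSeries.constantCoeff w = ε := by
    -- basic facts
  have hs2ne : s2 ≠ 0 := by
    intro h; apply hc; rw [← hs2, h]; ring
  have hxne : xσ ≠ 0 := by
    intro h; apply ha; rw [← hx0, h, map_zero]
  have hc00 : constantCoeff c = 0 := by
    simpa using coeff_of_lt_order (φ := c) 0 (by simpa using hc0)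
  have hs20 : constantCoeff s2 = 0 := by
    have h2 : (constantCoeff s2) ^ 2 = 0 := by
      rw [← map_pow, hs2, hc00]
    exact pow_eq_zero_iff (n := 2) (by norm_num) |>.mp h2
  rcases hε with hε1 | hεm1
  · -- case ε = 1 : the denominator is a unit
    subst hε1
    have hD0 : constantCoeff (xσ ^ 2 + yσ - xσ * s2) = 2 * a ^ 2 := by
      simp only [map_sub, map_add, map_mul, map_pow, hx0, hy0, hs20]
      ring
    have hD0ne : constantCoeff (xσ ^ 2 + yσ - xσ * s2) ≠ 0 := by
      rw [hD0]; exact mul_ne_zero two_ne_zero (pow_ne_zero 2 ha)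
    have hDne : xσ ^ 2 + yσ - xσ * s2 ≠ 0 := by
      intro h; rw [h, map_zero] at hD0; exact ha (by
        have : (2 : ℂ) * a ^ 2 = 0 := hD0.symm
        simpa [pow_eq_zero_iff] using this)
    refine ⟨hDne, (xσ ^ 2 + yσ - xσ * s2)⁻¹ * (xσ ^ 2 + yσ + xσ * s2), ?_, ?_, ?_⟩
    · rw [isUnit_iff_constantCoeff]
      have : constantCoeff (xσ ^ 2 + yσ + xσ * s2) = 2 * a ^ 2 := by
        simp only [map_add, map_mul, map_pow, hx0, hy0, hs20]; ring
      rw [map_mul, constantCoeff_inv, hD0, this]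
      simp [isUnit_iff_ne_zero, ha]
    · rw [← mul_assoc, PowerSeries.mul_inv_cancel _ hD0ne, one_mul]
    · have hN0 : constantCoeff (xσ ^ 2 + yσ + xσ * s2) = 2 * a ^ 2 := by
        simp only [map_add, map_mul, map_pow, hx0, hy0, hs20]; ring
      rw [map_mul, constantCoeff_inv, hD0, hN0]
      field_simp
  · -- case ε = -1
    subst hεm1
    -- order bookkeeping: write 2*b*xσ + c = s2 * k with constantCoeff k = 0
    have hs2fin : s2.order < ⊤ := order_finite_iff_ne_zero.mpr hs2ne
    have hcord : c.order = s2.order + s2.order := by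
      rw [← hs2, pow_two, order_mul]
    have hbord : (b ^ 2).order = b.order + b.order := by
      rw [pow_two, order_mul]
    have hos1 : 1 ≤ s2.order := by
      rw [ENat.one_le_iff_ne_zero]
      intro h
      rw [hcord, h, add_zero] at hc0
      exact lt_irrefl _ hc0
    have hoslt : s2.order < b.order := by
      by_contra h
      push_neg at h
      exact absurd (add_le_add h h) (by rw [← hcord, ← hbord]; exact not_le.mpr hord)
    have hosb : s2.order + 1 ≤ b.order :=
      (ENat.add_one_le_iff (by exact (lt_top_iff_ne_top.mp hs2fin))).mpr hoslt
    have hsum : s2.order + 1 ≤ (2 * b * xσ + c).order := by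
      refine le_trans (le_min ?_ ?_) (min_order_le_order_add _ _)
      · have h1 : (2 * b * xσ) = b * (2 * xσ) := by ring
        rw [h1]
        calc s2.order + 1 ≤ b.order := hosb
          _ ≤ b.order + (2 * xσ).order := le_self_add
          _ ≤ (b * (2 * xσ)).order := le_order_mul _ _
      · rw [hcord]
        exact add_le_add_right hos1 _
    set m : ℕ := s2.order.lift hs2fin with hm
    have hmval : (m : ℕ∞) = s2.order := ENat.coe_lift _ _
    have hdvd : (X : PowerSeries ℂ) ^ (m + 1) ∣ (2 * b * xσ + c) := by
      rw [X_pow_dvd_iff]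
      intro i hi
      apply coeff_of_lt_order
      refine lt_of_lt_of_le ?_ hsum
      have : (i : ℕ∞) ≤ (m : ℕ∞) := by exact_mod_cast Nat.lt_succ_iff.mp hi
      calc (i : ℕ∞) ≤ (m : ℕ∞) := this
        _ < (m : ℕ∞) + 1 := ENat.lt_add_one_iff (by simp) |>.mpr le_rfl
        _ = s2.order + 1 := by rw [hmval]
    obtain ⟨k0, hk0⟩ := hdvd
    -- s2 = X^m * U with U a unit
    have hfac : s2 = X ^ m * divXPowOrder s2 := by
      have h := X_pow_order_mul_divXPowOrder (f := s2)
      rw [← hmval, ENat.toNat_coe] at h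
      exact h.symm
    obtain ⟨u, hu⟩ := isUnit_divided_by_X_pow_order hs2ne
    have hXm : (X : PowerSeries ℂ) ^ m = s2 * (↑u⁻¹ : PowerSeries ℂ) := by
      calc (X : PowerSeries ℂ) ^ m
          = (X : PowerSeries ℂ) ^ m * (↑u * ↑u⁻¹) := by
            rw [Units.mul_inv, mul_one]
        _ = ((X : PowerSeries ℂ) ^ m * ↑u) * ↑u⁻¹ := by ring
        _ = s2 * ↑u⁻¹ := by rw [hu, ← hfac]
    set k : PowerSeries ℂ := (↑u⁻¹ : PowerSeries ℂ) * X * k0 with hkdef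
    have hk : 2 * b * xσ + c = s2 * k := by
      rw [hk0, pow_succ, hXm, hkdef]; ring
    have hkc0 : constantCoeff k = 0 := by
      rw [hkdef]; simp [map_mul]
    -- M := xσ^2 - yσ is a unit
    have hM0 : constantCoeff (xσ ^ 2 - yσ) = 2 * a ^ 2 := by
      simp only [map_sub, map_pow, hx0, hy0]; ring
    have hM0ne : constantCoeff (xσ ^ 2 - yσ) ≠ 0 := by rw [hM0]; exact mul_ne_zero two_ne_zero (pow_ne_zero 2 ha)
    set Minv : PowerSeries ℂ := (xσ ^ 2 - yσ)⁻¹ with hMinv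
    have hMM : (xσ ^ 2 - yσ) * Minv = 1 := PowerSeries.mul_inv_cancel _ hM0ne
    have hPM : (xσ ^ 2 + yσ) * (xσ ^ 2 - yσ) = -(xσ ^ 2 * (2 * b * xσ + c)) := by
      linear_combination -hcurve
    have hP : xσ ^ 2 + yσ = -(xσ ^ 2 * (2 * b * xσ + c)) * Minv := by
      linear_combination Minv * hPM - (xσ ^ 2 + yσ) * hMM
    have hD : xσ ^ 2 + yσ - xσ * s2 = -(xσ * s2) * (1 + xσ * k * Minv) := by
      linear_combination hP - xσ ^ 2 * Minv * hk
    have hN : xσ ^ 2 + yσ + xσ * s2 = (xσ * s2) * (1 - xσ * k * Minv) := by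
      linear_combination hP - xσ ^ 2 * Minv * hk
    have hE0 : constantCoeff (1 + xσ * k * Minv) = 1 := by
      simp [map_add, map_mul, hkc0]
    have hEne : (1 + xσ * k * Minv) ≠ 0 := by
      intro h; rw [h, map_zero] at hE0; exact one_ne_zero hE0.symm
    have hEE : (1 + xσ * k * Minv) * (1 + xσ * k * Minv)⁻¹ = 1 :=
      PowerSeries.mul_inv_cancel _ (by rw [hE0]; exact one_ne_zero)
    have hDne : xσ ^ 2 + yσ - xσ * s2 ≠ 0 := by
      rw [hD]
      exact mul_ne_zero (neg_ne_zero.mpr (mul_ne_zero hxne hs2ne)) hEne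
    refine ⟨hDne, -(1 - xσ * k * Minv) * (1 + xσ * k * Minv)⁻¹, ?_, ?_, ?_⟩
    · rw [isUnit_iff_constantCoeff]
      rw [map_mul, constantCoeff_inv, hE0]
      simp only [map_neg, map_sub, map_one, map_mul, hkc0]
      norm_num
    · rw [hD, hN]
      linear_combination (xσ * s2 * (1 - xσ * k * Minv)) * hEE
    · rw [map_mul, constantCoeff_inv, hE0]
      simp only [map_neg, map_sub, map_one, map_mul, hkc0]
      norm_num
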